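/- Lemma 2, case 1 < p ≤ 2: Let 1 < p ≤ 2 with conjugate exponent p', and let f ∈ L^p_A(ℝ₊) on the Jacobi hypergroup. Then there exists a positive constant c such that for every δ > 0, (∫₀^∞ min{1, (δx)^{2p'}} |𝓕(f)(x)|^{p'} dx/|c(x)|²)^{1/p'} ≤ c ω_{A,p}(f)(δ). -/

import Mathlib

open MeasureTheory Set Filter

/-- The `L^p` norm on `(0,∞)` with respect to the weighted measure `w(x) dx`. -/
noncomputable def wLpNorm (w : ℝ → ℝ) (p : ℝ) (f : ℝ → ℂ) : ℝ :=
  (∫ x in Set.Ioi (0 : ℝ), ‖f x‖ ^ p * w x) ^ (1 / p)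

/-- Membership in `L^p((0,∞), w(x) dx)`. -/
def MemW (w : ℝ → ℝ) (p : ℝ) (f : ℝ → ℂ) : Prop :=
  AEMeasurable f (volume.restrict (Set.Ioi (0 : ℝ))) ∧
    IntegrableOn (fun x => ‖f x‖ ^ p * w x) (Set.Ioi (0 : ℝ))

/-- The Jacobi hypergroup setting: the Chébli–Trimèche hypergroup `(ℝ₊, ∗(A))` with
`A(x) = 2^(2ρ) (sinh x)^(2α+1) (cosh x)^(2β+1)`, `α ≥ β ≥ -1/2`, `α ≠ -1/2`,
`ρ = α + β + 1`.  Its characters are the Jacobi functions `φ_λ`, satisfying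
`|1 - φ_λ(t)| ≥ c₀ min{1, (λt)²}`.  The density `cden = |c(λ)|⁻²` is even, continuous
and comparable to `|λ|^(2α+1)` for `|λ| > k` and to `|λ|²` for `|λ| ≤ k`.  The
generalized Fourier transform `FT` is given on `L¹_A` by
`𝓕(f)(λ) = ∫₀^∞ f(x) φ_λ(x) A(x) dx`; it satisfies `‖𝓕 f‖_∞ ≤ ‖f‖_{A,1}`, the
Hausdorff–Young inequality, the Hardy–Littlewood inequality of Lemma 1 and the
translation identity `𝓕(τ_δ f)(λ) = φ_λ(δ) 𝓕(f)(λ)`, where the generalized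
translations `τ_δ` are `L^p_A`-contractions. -/
structure JacobiHypergroup where
  α : ℝ
  β : ℝ
  ρ : ℝ
  hβα : β ≤ α
  hβ : -(1/2) ≤ β
  hα : α ≠ -(1/2)
  hρ : ρ = α + β + 1
  /-- the weight function `A` of the Jacobi hypergroup -/
  A : ℝ → ℝ
  hA : ∀ x : ℝ, 0 ≤ x →
    A x = (2 : ℝ) ^ (2 * ρ) * Real.sinh x ^ (2 * α + 1) * Real.cosh x ^ (2 * β + 1)
  /-- the Jacobi functions `φ_λ`, the characters of the hypergroup -/
  φ : ℝ → ℝ → ℂ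
  c₀ : ℝ
  hc₀ : 0 < c₀
  hφ_lower : ∀ lam t : ℝ, 0 < t →
    c₀ * min 1 ((lam * t) ^ 2) ≤ ‖1 - φ lam t‖
  /-- the density `|c(λ)|⁻²` of the Plancherel measure -/
  cden : ℝ → ℝ
  hcden_cont : Continuous cden
  hcden_even : ∀ x : ℝ, cden (-x) = cden x
  k : ℝ
  k₁ : ℝ
  k₂ : ℝ
  hk : 0 < k
  hk₁ : 0 < k₁
  hk₂ : 0 < k₂
  hcden_hi : ∀ x : ℝ, k < |x| →
    k₁ * |x| ^ (2 * α + 1) ≤ cden x ∧ cden x ≤ k₂ * |x| ^ (2 * α + 1)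
  hcden_lo : ∀ x : ℝ, |x| ≤ k →
    k₁ * |x| ^ (2 : ℝ) ≤ cden x ∧ cden x ≤ k₂ * |x| ^ (2 : ℝ)
  /-- the generalized Fourier transform -/
  FT : (ℝ → ℂ) → ℝ → ℂ
  hFT_def : ∀ f : ℝ → ℂ, MemW A 1 f → ∀ lam : ℝ,
    FT f lam = ∫ x in Set.Ioi (0 : ℝ), f x * φ lam x * (A x : ℂ)
  hFT_meas : ∀ f : ℝ → ℂ, Measurable (FT f)
  hFT_sub : ∀ f g : ℝ → ℂ, ∀ lam : ℝ,
    FT (fun y => f y - g y) lam = FT f lam - FT g lam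
  /-- `‖𝓕 f‖_∞ ≤ ‖f‖_{A,1}` -/
  hFT_sup : ∀ f : ℝ → ℂ, MemW A 1 f → ∀ lam : ℝ,
    ‖FT f lam‖ ≤ wLpNorm A 1 f
  /-- the Hausdorff–Young inequality `‖𝓕 f‖_{c,p'} ≤ C ‖f‖_{A,p}` -/
  hHY : ∀ p p' : ℝ, 1 < p → p ≤ 2 → 1 / p + 1 / p' = 1 →
    ∃ C > (0 : ℝ), ∀ f : ℝ → ℂ, MemW A p f →
      (∫⁻ lam in Set.Ioi (0 : ℝ),
          ENNReal.ofReal (‖FT f lam‖ ^ p' * cden lam)) ^ (1 / p')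
        ≤ ENNReal.ofReal (C * wLpNorm A p f)
  /-- the Hardy–Littlewood inequality of Lemma 1 (with the piecewise weight
  `g(t) = t³` for `t ≤ k`, `g(t) = t^(2(α+1))` for `t > k`) -/
  hHL : ∀ p : ℝ, 1 < p → p ≤ 2 →
    ∃ C > (0 : ℝ), ∀ f : ℝ → ℂ, MemW A p f →
      ∫⁻ x in Set.Ioi (0 : ℝ),
          ENNReal.ofReal ((if x ≤ k then x ^ (3 : ℝ) else x ^ (2 * (α + 1))) ^ (p - 2) *
            ‖FT f x‖ ^ p * cden x)
        ≤ ENNReal.ofReal (C * wLpNorm A p f ^ p)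
  /-- the generalized translation operators -/
  τ : ℝ → (ℝ → ℂ) → ℝ → ℂ
  hτ_contract : ∀ p : ℝ, 1 ≤ p → ∀ (δ : ℝ) (f : ℝ → ℂ), MemW A p f →
    MemW A p (τ δ f) ∧ wLpNorm A p (τ δ f) ≤ wLpNorm A p f
  hτ_diff : ∀ p : ℝ, 1 ≤ p → ∀ (δ : ℝ) (f : ℝ → ℂ), MemW A p f →
    MemW A p (fun y => τ δ f y - f y)
  /-- the translation identity `𝓕(τ_δ f)(λ) = φ_λ(δ) 𝓕(f)(λ)` -/
  hτ_FT : ∀ p : ℝ, 1 ≤ p → p ≤ 2 → ∀ (δ : ℝ) (f : ℝ → ℂ), MemW A p f →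
    ∀ᵐ lam ∂(volume.restrict (Set.Ioi (0 : ℝ))),
      FT (τ δ f) lam = φ lam δ * FT f lam

/-- The modulus of continuity of first order, `ω_{A,p}(f)(δ) = ‖τ_δ f - f‖_{A,p}`. -/
noncomputable def JacobiHypergroup.omega (S : JacobiHypergroup) (p : ℝ)
    (f : ℝ → ℂ) (δ : ℝ) : ℝ :=
  wLpNorm S.A p (fun y => S.τ δ f y - f y)

/-- **Lemma 2, case 1 < p ≤ 2**: for `1 < p ≤ 2` with conjugate exponent `p'` and
`f ∈ L^p_A(ℝ₊)` on the Jacobi hypergroup, there exists `c > 0` such that for every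
`δ > 0`,
`(∫₀^∞ min{1,(δx)^(2p')} |𝓕(f)(x)|^(p') dx/|c(x)|²)^(1/p') ≤ c ω_{A,p}(f)(δ)`. -/
theorem lemma2_one_lt_p (S : JacobiHypergroup) (p p' : ℝ) (hp : 1 < p) (hp2 : p ≤ 2)
    (hpp' : 1 / p + 1 / p' = 1) (f : ℝ → ℂ) (hf : MemW S.A p f) :
    ∃ c > (0 : ℝ), ∀ δ > (0 : ℝ),
      (∫⁻ x in Set.Ioi (0 : ℝ),
          ENNReal.ofReal (min 1 ((δ * x) ^ (2 * p')) *
            ‖S.FT f x‖ ^ p' * S.cden x)) ^ (1 / p')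
        ≤ ENNReal.ofReal (c * S.omega p f δ) := by
  obtain ⟨C, hC, hHYC⟩ := S.hHY p p' hp hp2 hpp'
  have hp0 : 0 < p := by linarith
  have hp'pos : 0 < p' := by
    have h1 : 0 < 1 / p' := by
      have hlt : 1 / p < 1 := by
        rw [div_lt_one hp0]; exact hp
      linarith
    exact one_div_pos.mp h1
  refine ⟨C / S.c₀, div_pos hC S.hc₀, ?_⟩
  intro δ hδ
  set g : ℝ → ℂ := fun y => S.τ δ f y - f y with hg_def
  have hg : MemW S.A p g := S.hτ_diff p hp.le δ f hf
  have hae := S.hτ_FT p hp.le hp2 δ f hf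
  -- pointwise a.e. bound on the integrand
  have key : ∀ᵐ x ∂(volume.restrict (Set.Ioi (0 : ℝ))),
      ENNReal.ofReal (min 1 ((δ * x) ^ (2 * p')) *
          ‖S.FT f x‖ ^ p' * S.cden x)
        ≤ ENNReal.ofReal (S.c₀ ^ (-p') *
            (‖S.FT g x‖ ^ p' * S.cden x)) := by
    filter_upwards [hae, self_mem_ae_restrict measurableSet_Ioi] with x hx hx0
    apply ENNReal.ofReal_le_ofReal
    have hx0' : (0 : ℝ) < x := hx0
    have hδx : (0 : ℝ) < δ * x := mul_pos hδ hx0'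
    have hcden : 0 ≤ S.cden x := by
      rcases le_or_gt (|x|) S.k with h | h
      · exact le_trans (mul_nonneg S.hk₁.le (Real.rpow_nonneg (abs_nonneg x) _))
          (S.hcden_lo x h).1
      · exact le_trans (mul_nonneg S.hk₁.le (Real.rpow_nonneg (abs_nonneg x) _))
          (S.hcden_hi x h).1
    have hFTg : ‖S.FT g x‖
        = ‖1 - S.φ x δ‖ * ‖S.FT f x‖ := by
      have h1 : S.FT g x = (S.φ x δ - 1) * S.FT f x := by
        have h2 := S.hFT_sub (S.τ δ f) f x
        rw [hg_def, h2, hx]; ring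
      rw [h1, norm_mul, norm_sub_rev]
    -- min 1 ((δx)^(2p')) = (min 1 ((δx)^2))^(p')
    have hmin : min 1 ((δ * x) ^ (2 * p')) = (min 1 ((δ * x) ^ 2)) ^ p' := by
      have ha : (δ * x) ^ (2 * p') = ((δ * x) ^ 2 : ℝ) ^ p' := by
        rw [Real.rpow_mul hδx.le, Real.rpow_two]
      rw [ha]
      rcases le_total ((δ * x) ^ 2 : ℝ) 1 with h | h
      · rw [min_eq_right h, min_eq_right
          (Real.rpow_le_one (sq_nonneg _) h hp'pos.le)]
      · rw [min_eq_left h, min_eq_left (Real.one_le_rpow h hp'pos.le)]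
        exact (Real.one_rpow _).symm
    -- min 1 ((δx)^2) ≤ c₀⁻¹ * |1 - φ x δ|
    have hlow : min 1 ((δ * x) ^ 2) ≤ S.c₀⁻¹ * ‖1 - S.φ x δ‖ := by
      have h := S.hφ_lower x δ hδ
      rw [mul_comm x δ] at h
      calc min 1 ((δ * x) ^ 2) = S.c₀⁻¹ * (S.c₀ * min 1 ((δ * x) ^ 2)) := by
            rw [← mul_assoc, inv_mul_cancel₀ S.hc₀.ne', one_mul]
        _ ≤ _ := mul_le_mul_of_nonneg_left h (inv_nonneg.mpr S.hc₀.le)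
    have hminn : 0 ≤ min 1 ((δ * x) ^ 2) := le_min zero_le_one (sq_nonneg _)
    have hmain : min 1 ((δ * x) ^ (2 * p'))
        ≤ S.c₀ ^ (-p') * ‖1 - S.φ x δ‖ ^ p' := by
      rw [hmin]
      have h1 : (min 1 ((δ * x) ^ 2)) ^ p'
          ≤ (S.c₀⁻¹ * ‖1 - S.φ x δ‖) ^ p' :=
        Real.rpow_le_rpow hminn hlow hp'pos.le
      have h2 : (S.c₀⁻¹ * ‖1 - S.φ x δ‖) ^ p'
          = S.c₀ ^ (-p') * ‖1 - S.φ x δ‖ ^ p' := by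
        rw [Real.mul_rpow (inv_nonneg.mpr S.hc₀.le) (norm_nonneg _),
          Real.inv_rpow S.hc₀.le, ← Real.rpow_neg S.hc₀.le]
      rw [← h2]; exact h1
    calc min 1 ((δ * x) ^ (2 * p')) * ‖S.FT f x‖ ^ p' * S.cden x
        ≤ (S.c₀ ^ (-p') * ‖1 - S.φ x δ‖ ^ p') *
            ‖S.FT f x‖ ^ p' * S.cden x := by
          apply mul_le_mul_of_nonneg_right _ hcden
          exact mul_le_mul_of_nonneg_right hmain (Real.rpow_nonneg (norm_nonneg _) _)
      _ = S.c₀ ^ (-p') * (‖S.FT g x‖ ^ p' * S.cden x) := by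
          rw [hFTg, Real.mul_rpow (norm_nonneg _) (norm_nonneg _)]
          ring
  have hc₀neg : (0 : ℝ) ≤ S.c₀ ^ (-p') := Real.rpow_nonneg S.hc₀.le _
  have step1 : (∫⁻ x in Set.Ioi (0 : ℝ),
        ENNReal.ofReal (min 1 ((δ * x) ^ (2 * p')) *
          ‖S.FT f x‖ ^ p' * S.cden x))
      ≤ ENNReal.ofReal (S.c₀ ^ (-p')) *
        ∫⁻ x in Set.Ioi (0 : ℝ),
          ENNReal.ofReal (‖S.FT g x‖ ^ p' * S.cden x) := by
    calc _ ≤ ∫⁻ x in Set.Ioi (0 : ℝ),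
          ENNReal.ofReal (S.c₀ ^ (-p') *
            (‖S.FT g x‖ ^ p' * S.cden x)) := lintegral_mono_ae key
      _ = _ := by
          simp_rw [ENNReal.ofReal_mul hc₀neg]
          exact lintegral_const_mul' _ _ ENNReal.ofReal_ne_top
  have hHYg := hHYC g hg
  have hconst : (ENNReal.ofReal (S.c₀ ^ (-p'))) ^ (1 / p')
      = ENNReal.ofReal (S.c₀⁻¹) := by
    rw [ENNReal.ofReal_rpow_of_pos (Real.rpow_pos_of_pos S.hc₀ _)]
    congr 1
    rw [← Real.rpow_mul S.hc₀.le]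
    have h : -p' * (1 / p') = -1 := by field_simp
    rw [h, Real.rpow_neg_one]
  calc (∫⁻ x in Set.Ioi (0 : ℝ),
        ENNReal.ofReal (min 1 ((δ * x) ^ (2 * p')) *
          ‖S.FT f x‖ ^ p' * S.cden x)) ^ (1 / p')
      ≤ (ENNReal.ofReal (S.c₀ ^ (-p')) *
          ∫⁻ x in Set.Ioi (0 : ℝ),
            ENNReal.ofReal (‖S.FT g x‖ ^ p' * S.cden x)) ^ (1 / p') :=
        ENNReal.rpow_le_rpow step1 (by positivity)
    _ = (ENNReal.ofReal (S.c₀ ^ (-p'))) ^ (1 / p') *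
          (∫⁻ x in Set.Ioi (0 : ℝ),
            ENNReal.ofReal (‖S.FT g x‖ ^ p' * S.cden x)) ^ (1 / p') :=
        ENNReal.mul_rpow_of_nonneg _ _ (by positivity)
    _ ≤ ENNReal.ofReal (S.c₀⁻¹) * ENNReal.ofReal (C * wLpNorm S.A p g) := by
        rw [hconst]
        exact mul_le_mul_right hHYg _
    _ = ENNReal.ofReal (C / S.c₀ * S.omega p f δ) := by
        rw [← ENNReal.ofReal_mul (inv_nonneg.mpr S.hc₀.le)]
        congr 1
        have : S.omega p f δ = wLpNorm S.A p g := rfl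
        rw [this]; ring
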